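/- Let p ∈ [2, 4], let 1 ≤ k < n be integers, and let k+1 ≤ m ≤ n be an integer. Then (m−k)/m^p + k·(1/k − 1/m)^p ≤ (n−k)/n^p + k·(1/k − 1/n)^p. -/

import Mathlib

lemma key_cubic (q u : ℝ) (hq1 : 1 ≤ q) (hq3 : q ≤ 3) (hu0 : 0 ≤ u) (hu1 : u ≤ 1) :
    q * u ≤ (q + 1) * u ^ 3 + 1 := by
  nlinarith [mul_nonneg (add_nonneg hu0 (by norm_num : (0:ℝ) ≤ 1)) (sq_nonneg (2*u - 1)),
    mul_nonneg (mul_nonneg (by linarith : (0:ℝ) ≤ 3 - q) hu0)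
      (mul_nonneg (by linarith : (0:ℝ) ≤ 1 - u) (by linarith : (0:ℝ) ≤ 1 + u))]

lemma key (q u : ℝ) (hq1 : 1 ≤ q) (hq3 : q ≤ 3) (hu : 0 ≤ u) :
    q * u ≤ (q + 1) * u ^ q + 1 := by
  rcases eq_or_lt_of_le hu with h0 | h0
  · rw [← h0, Real.zero_rpow (by linarith : q ≠ 0)]
    norm_num
  rcases le_total u 1 with h1 | h1
  · have h3 : u ^ (3:ℝ) ≤ u ^ q := Real.rpow_le_rpow_of_exponent_ge h0 h1 hq3
    have hcube : u ^ (3:ℝ) = u ^ 3 := by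
      rw [show (3:ℝ) = ((3:ℕ):ℝ) by norm_num, Real.rpow_natCast]
    rw [hcube] at h3
    have := key_cubic q u hq1 hq3 hu h1
    nlinarith
  · have h2 : u ^ (1:ℝ) ≤ u ^ q := Real.rpow_le_rpow_of_exponent_le h1 hq1
    rw [Real.rpow_one] at h2
    nlinarith

lemma hasD (p K : ℝ) (x : ℝ) (hp : 2 ≤ p) (hK : 0 < K) (hx : K < x) :
    HasDerivAt (fun x => (x - K) / x ^ p + K * (1/K - 1/x) ^ p)
      ((1 * x ^ p - (x - K) * (p * x ^ (p-1))) / (x ^ p) ^ 2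
        + K * ((x ^ 2)⁻¹ * p * (1/K - 1/x) ^ (p-1))) x := by
  have hx0 : (0:ℝ) < x := hK.trans hx
  have h1 : HasDerivAt (fun y : ℝ => y - K) 1 x := (hasDerivAt_id x).sub_const K
  have h2 : HasDerivAt (fun y : ℝ => y ^ p) (p * x ^ (p-1)) x :=
    Real.hasDerivAt_rpow_const (Or.inl hx0.ne')
  have hdiv := h1.div h2 (Real.rpow_pos_of_pos hx0 p).ne'
  have h3 : HasDerivAt (fun y : ℝ => 1/K - 1/y) ((x ^ 2)⁻¹) x := by
    have := (hasDerivAt_inv hx0.ne').const_sub (1/K)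
    simpa [one_div] using this
  have h4 := (h3.rpow_const (Or.inr (by linarith : (1:ℝ) ≤ p))).const_mul K
  exact hdiv.add h4

lemma Dnonneg (p K : ℝ) (x : ℝ) (hp : 2 ≤ p) (hp4 : p ≤ 4) (hK : 1 ≤ K) (hx : K < x) :
    0 ≤ (1 * x ^ p - (x - K) * (p * x ^ (p-1))) / (x ^ p) ^ 2
        + K * ((x ^ 2)⁻¹ * p * (1/K - 1/x) ^ (p-1)) := by
  have hK0 : (0:ℝ) < K := lt_of_lt_of_le one_pos hK
  have hx0 : (0:ℝ) < x := hK0.trans hx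
  set A := x ^ (p-1) with hA
  have hA0 : 0 < A := Real.rpow_pos_of_pos hx0 _
  have hxp : x ^ p = A * x := by
    rw [hA, ← Real.rpow_add_one hx0.ne' (p-1), sub_add_cancel]
  set u := (x - K) / K with hu
  have hu0 : 0 < u := div_pos (by linarith) hK0
  have hbase : 1/K - 1/x = u / x := by
    rw [hu]; field_simp
  have hbp : (1/K - 1/x) ^ (p-1) = u ^ (p-1) / A := by
    rw [hbase, Real.div_rpow hu0.le hx0.le]
  set U := u ^ (p-1) with hU
  have hU0 : 0 < U := Real.rpow_pos_of_pos hu0 _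
  have hkey : (p-1) * u ≤ ((p-1) + 1) * U + 1 :=
    key (p-1) u (by linarith) (by linarith) hu0.le
  have hnum : 0 ≤ p * U - (p-1) * u + 1 := by linarith
  have hxe : x = u * K + K := by
    rw [hu]; field_simp; ring
  clear_value U
  clear_value A
  clear_value u
  rw [hxp, hbp, hxe]
  have hx0' : u * K + K ≠ 0 := by nlinarith
  have hexp : (1 * (A * (u * K + K)) - (u * K + K - K) * (p * A)) / (A * (u * K + K)) ^ 2
      + K * (((u * K + K) ^ 2)⁻¹ * p * (U / A)) = K * (p * U - (p-1) * u + 1) / (A * (u * K + K) ^ 2) := by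
    field_simp
    ring
  rw [hexp]
  positivity

lemma aux (p : ℝ) (hp : 2 ≤ p) (hp4 : p ≤ 4) (K : ℝ) (hK : 1 ≤ K) :
    MonotoneOn (fun x => (x - K) / x ^ p + K * (1/K - 1/x) ^ p) (Set.Ici (K + 1)) := by
  have hK0 : (0:ℝ) < K := lt_of_lt_of_le one_pos hK
  have hsub : ∀ x : ℝ, x ∈ Set.Ici (K + 1) → K < x := fun x hx => by
    simp only [Set.mem_Ici] at hx; linarith
  apply monotoneOn_of_deriv_nonneg (convex_Ici _)
  · exact fun x hx => ((hasD p K x hp hK0 (hsub x hx)).continuousAt).continuousWithinAt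
  · intro x hx
    rw [interior_Ici] at hx
    have hxK : K < x := by simp only [Set.mem_Ioi] at hx; linarith
    exact (hasD p K x hp hK0 hxK).differentiableAt.differentiableWithinAt
  · intro x hx
    rw [interior_Ici] at hx
    have hxK : K < x := by simp only [Set.mem_Ioi] at hx; linarith
    rw [(hasD p K x hp hK0 hxK).deriv]
    exact Dnonneg p K x hp hp4 hK hxK

theorem stmt_12 (p : ℝ) (hp : 2 ≤ p) (hp4 : p ≤ 4) (k m n : ℕ)
    (hk : 1 ≤ k) (hkn : k < n) (hm1 : k + 1 ≤ m) (hm2 : m ≤ n) :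
    ((m : ℝ) - k) / (m : ℝ) ^ p + (k : ℝ) * (1 / (k : ℝ) - 1 / (m : ℝ)) ^ p
      ≤ ((n : ℝ) - k) / (n : ℝ) ^ p + (k : ℝ) * (1 / (k : ℝ) - 1 / (n : ℝ)) ^ p := by
  have hk1 : (1:ℝ) ≤ (k:ℝ) := by exact_mod_cast hk
  have hm : (k:ℝ) + 1 ≤ (m:ℝ) := by
    have : ((k+1 : ℕ) : ℝ) ≤ (m:ℝ) := by exact_mod_cast hm1
    push_cast at this; linarith
  have hmn : (m:ℝ) ≤ (n:ℝ) := by exact_mod_cast hm2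
  have := aux p hp hp4 (k:ℝ) hk1 (Set.mem_Ici.2 hm) (Set.mem_Ici.2 (hm.trans hmn)) hmn
  simpa using this
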